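/- Let f : [n] → {0,1} and let S(f) be its sorted (monotone) rearrangement with the same number of ones. With ΔI_g defined as Σ over maximal a-paths p of (g(end of p) − g(start of p)) divided by n (sum over all a ∈ {0,...,log₂ n −1}), we have ΔI_{S(f)} ≥ ΔI_f. -/

import Mathlib

open Finset

/-- Sum of a monotone weight over any `m`-subset of `range n` is at most
the sum over the top `m` positions. -/
private lemma key_sorted (w : ℕ → ℝ) (hw : Monotone w) :
    ∀ n : ℕ, ∀ T : Finset ℕ, T ⊆ range n →
      ∑ x ∈ T, w x ≤ ∑ x ∈ Ico (n - T.card) n, w x := by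
  intro n
  induction n with
  | zero =>
      intro T hT
      have hT0 : T = ∅ := subset_empty.mp (by simpa using hT)
      simp [hT0]
  | succ n ih =>
      intro T hT
      by_cases h : n ∈ T
      · have hsub : T.erase n ⊆ range n := by
          intro x hx
          have hx1 := hT (erase_subset _ _ hx)
          have hx2 : x ≠ n := ne_of_mem_erase hx
          simp only [mem_range] at hx1 ⊢
          omega
        have hcard : (T.erase n).card = T.card - 1 := card_erase_of_mem h
        have hpos : 1 ≤ T.card := card_pos.mpr ⟨n, h⟩
        have hs : ∑ x ∈ T, w x = ∑ x ∈ T.erase n, w x + w n := by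
          rw [add_comm, ← Finset.add_sum_erase _ _ h]
        have hle : n - (T.card - 1) ≤ n := Nat.sub_le _ _
        have htop : ∑ x ∈ Ico (n + 1 - T.card) (n + 1), w x
            = ∑ x ∈ Ico (n - (T.card - 1)) n, w x + w n := by
          have he : n + 1 - T.card = n - (T.card - 1) := by omega
          rw [he, Finset.sum_Ico_succ_top hle]
        have hIH := ih (T.erase n) hsub
        rw [hcard] at hIH
        rw [hs, htop]
        linarith
      · have hsub : T ⊆ range n := by
          intro x hx
          have hx1 := hT hx
          have hx2 : x ≠ n := fun he => h (he ▸ hx)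
          simp only [mem_range] at hx1 ⊢
          omega
        have hm' : T.card ≤ n := by simpa using card_le_card hsub
        refine (ih T hsub).trans ?_
        rw [Finset.sum_Ico_eq_sum_range, Finset.sum_Ico_eq_sum_range]
        have h1 : n - (n - T.card) = T.card := by omega
        have h2 : n + 1 - (n + 1 - T.card) = T.card := by omega
        rw [h1, h2]
        apply Finset.sum_le_sum
        intro i _
        apply hw
        omega

/-- The weight function is monotone. -/
private lemma w_mono (k n : ℕ) : Monotone (fun x : ℕ =>
    ((((range k).filter fun a => n - 2 ^ a ≤ x).card : ℝ)
      - (((range k).filter fun a => x < 2 ^ a).card : ℝ))) := by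
  intro x y hxy
  have h1 : ((range k).filter fun a => n - 2 ^ a ≤ x)
      ⊆ ((range k).filter fun a => n - 2 ^ a ≤ y) :=
    monotone_filter_right _ (fun a _ ha => le_trans ha hxy)
  have h2 : ((range k).filter fun a => y < 2 ^ a)
      ⊆ ((range k).filter fun a => x < 2 ^ a) :=
    monotone_filter_right _ (fun a _ ha => lt_of_le_of_lt hxy ha)
  have c1 := card_le_card h1
  have c2 := card_le_card h2
  simp only
  have := (Nat.cast_le (α := ℝ)).mpr c1
  have := (Nat.cast_le (α := ℝ)).mpr c2
  linarith

/-- Rewriting the path sum as a weighted sum over the ones of `g`. -/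
private lemma rewrite_sum (k n : ℕ) (hn : n = 2 ^ k) (g : ℕ → Bool) :
    ∑ a ∈ range k, ∑ s ∈ range (2 ^ a),
        ((if g (s + (n - 2 ^ a)) then (1:ℝ) else 0) - (if g s then (1:ℝ) else 0))
    = ∑ x ∈ (range n).filter (fun x => g x = true),
        ((((range k).filter fun a => n - 2 ^ a ≤ x).card : ℝ)
          - (((range k).filter fun a => x < 2 ^ a).card : ℝ)) := by
  have hpow : ∀ a ∈ range k, 2 ^ a ≤ n := by
    intro a ha
    rw [hn]
    exact Nat.pow_le_pow_right (by norm_num) (le_of_lt (mem_range.mp ha))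
  have step1 : ∀ a ∈ range k,
      ∑ s ∈ range (2 ^ a), (if g (s + (n - 2 ^ a)) then (1:ℝ) else 0)
      = ∑ x ∈ range n, (if n - 2 ^ a ≤ x then (if g x then (1:ℝ) else 0) else 0) := by
    intro a ha
    have h2a := hpow a ha
    conv_rhs => rw [← Finset.sum_filter]
    have hIco : (range n).filter (fun x => n - 2 ^ a ≤ x) = Ico (n - 2 ^ a) n := by
      ext x; simp only [mem_filter, mem_range, mem_Ico]; omega
    rw [hIco, Finset.sum_Ico_eq_sum_range]
    have hcnt : n - (n - 2 ^ a) = 2 ^ a := Nat.sub_sub_self h2a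
    rw [hcnt]
    apply Finset.sum_congr rfl
    intro i _
    rw [add_comm]
  have step2 : ∀ a ∈ range k,
      ∑ s ∈ range (2 ^ a), (if g s then (1:ℝ) else 0)
      = ∑ x ∈ range n, (if x < 2 ^ a then (if g x then (1:ℝ) else 0) else 0) := by
    intro a ha
    have h2a := hpow a ha
    conv_rhs => rw [← Finset.sum_filter]
    congr 1
    ext x; simp only [mem_filter, mem_range]; omega
  calc ∑ a ∈ range k, ∑ s ∈ range (2 ^ a),
        ((if g (s + (n - 2 ^ a)) then (1:ℝ) else 0) - (if g s then (1:ℝ) else 0))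
      = ∑ a ∈ range k, (∑ s ∈ range (2 ^ a), (if g (s + (n - 2 ^ a)) then (1:ℝ) else 0)
          - ∑ s ∈ range (2 ^ a), (if g s then (1:ℝ) else 0)) := by
        apply Finset.sum_congr rfl; intro a _; rw [Finset.sum_sub_distrib]
    _ = ∑ a ∈ range k, ∑ x ∈ range n,
          ((if n - 2 ^ a ≤ x then (if g x then (1:ℝ) else 0) else 0)
            - (if x < 2 ^ a then (if g x then (1:ℝ) else 0) else 0)) := by
        apply Finset.sum_congr rfl; intro a ha
        rw [step1 a ha, step2 a ha, Finset.sum_sub_distrib]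
    _ = ∑ x ∈ range n, ∑ a ∈ range k,
          ((if n - 2 ^ a ≤ x then (if g x then (1:ℝ) else 0) else 0)
            - (if x < 2 ^ a then (if g x then (1:ℝ) else 0) else 0)) := Finset.sum_comm
    _ = ∑ x ∈ range n, (if g x then (1:ℝ) else 0) *
          ((((range k).filter fun a => n - 2 ^ a ≤ x).card : ℝ)
            - (((range k).filter fun a => x < 2 ^ a).card : ℝ)) := by
        apply Finset.sum_congr rfl; intro x _
        by_cases hgx : g x = true
        · simp only [hgx, if_true, one_mul]
          rw [Finset.sum_sub_distrib, Finset.sum_boole, Finset.sum_boole]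
        · simp [hgx]
    _ = ∑ x ∈ (range n).filter (fun x => g x = true),
          ((((range k).filter fun a => n - 2 ^ a ≤ x).card : ℝ)
            - (((range k).filter fun a => x < 2 ^ a).card : ℝ)) := by
        rw [Finset.sum_filter]
        apply Finset.sum_congr rfl; intro x _
        by_cases hx : g x <;> simp [hx]

/-- An upward-closed subset of `range n` is a final segment. -/
private lemma filter_eq_Ico (n : ℕ) (F : Finset ℕ) (hF : F ⊆ range n)
    (hup : ∀ x ∈ F, ∀ y, x ≤ y → y < n → y ∈ F) :
    F = Ico (n - F.card) n := by
  have hm : F.card ≤ n := by simpa using card_le_card hF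
  have hsub : Ico (n - F.card) n ⊆ F := by
    intro y hy
    simp only [mem_Ico] at hy
    by_contra hy'
    have hFsub : F ⊆ Ico (y + 1) n := by
      intro x hx
      simp only [mem_Ico]
      have hxn : x < n := by simpa using hF hx
      refine ⟨?_, hxn⟩
      by_contra hc
      exact hy' (hup x hx y (by omega) hy.2)
    have hcard := card_le_card hFsub
    rw [Nat.card_Ico] at hcard
    omega
  exact (Finset.eq_of_subset_of_card_le hsub (by rw [Nat.card_Ico]; omega)).symm

theorem stmt_5 (k n : ℕ) (hn : n = 2 ^ k) (f Sf : ℕ → Bool)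
    (hSmono : MonotoneOn Sf (Set.Iio n))
    (hones : ((Finset.range n).filter fun x => Sf x = true).card =
      ((Finset.range n).filter fun x => f x = true).card) :
    (∑ a ∈ Finset.range k, ∑ s ∈ Finset.range (2 ^ a),
        ((if f (s + (n - 2 ^ a)) then (1:ℝ) else 0) - (if f s then (1:ℝ) else 0))) / n ≤
    (∑ a ∈ Finset.range k, ∑ s ∈ Finset.range (2 ^ a),
        ((if Sf (s + (n - 2 ^ a)) then (1:ℝ) else 0) - (if Sf s then (1:ℝ) else 0))) / n := by
  have hnpos : (0:ℝ) < n := by rw [hn]; positivity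
  rw [div_le_div_iff_of_pos_right hnpos]
  rw [rewrite_sum k n hn f, rewrite_sum k n hn Sf]
  have hup : ∀ x ∈ (range n).filter (fun x => Sf x = true),
      ∀ y, x ≤ y → y < n → y ∈ (range n).filter (fun x => Sf x = true) := by
    intro x hx y hxy hyn
    simp only [mem_filter, mem_range] at hx ⊢
    refine ⟨hyn, ?_⟩
    have hle := hSmono (Set.mem_Iio.mpr hx.1) (Set.mem_Iio.mpr hyn) hxy
    rw [hx.2] at hle
    exact (le_antisymm hle (Bool.le_true _)).symm
  have hEq := filter_eq_Ico n _ (filter_subset _ _) hup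
  rw [hEq, hones]
  exact key_sorted _ (w_mono k n) n _ (filter_subset _ _)
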